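/- For every k ∈ {1,…,n}, the (d_k−d_{k−1})×m matrix u_k has maximal rank, i.e. rank u_k = d_k − d_{k−1}. -/

import Mathlib

open Matrix MeasureTheory

noncomputable section

/-- The span of the vectors `A^l B v` for `l < N`, `v ∈ ℝ^m`; for `N = k` this is `E_k`. -/
def kalmanSpan (d m : ℕ) (A : Matrix (Fin d) (Fin d) ℝ) (B : Matrix (Fin d) (Fin m) ℝ)
    (N : ℕ) : Submodule ℝ (Fin d → ℝ) :=
  Submodule.span ℝ {x | ∃ l, l < N ∧ ∃ v : Fin m → ℝ, x = (A ^ l * B).mulVec v}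

/-- `d_k = dim E_k` (with `d_0 = 0`). -/
def dk {d m : ℕ} (A : Matrix (Fin d) (Fin d) ℝ) (B : Matrix (Fin d) (Fin m) ℝ) (k : ℕ) : ℕ :=
  Module.finrank ℝ (kalmanSpan d m A B k)

/-- The matrix `u_k`, of size `(d_k − d_{k−1}) × m`, with entries
`(u_k)_{j,i} = ⟨e_{d_{k−1}+j}, A^{k−1} B e_i⟩ / (k−1)!` (zero-based row index `j`; the index
`d_{k−1}+j` always lies in range, so the guard is always satisfied). -/
def uMat {d m : ℕ} (A : Matrix (Fin d) (Fin d) ℝ) (B : Matrix (Fin d) (Fin m) ℝ)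
    (e : Fin d → Fin d → ℝ) (k : ℕ) :
    Matrix (Fin (dk A B k - dk A B (k - 1))) (Fin m) ℝ :=
  Matrix.of fun j i =>
    if h : dk A B (k - 1) + (j : ℕ) < d then
      (e ⟨dk A B (k - 1) + (j : ℕ), h⟩ ⬝ᵥ fun a => (A ^ (k - 1) * B) a i) /
        Nat.factorial (k - 1)
    else 0

/-- For every `k ∈ {1,…,n}`, the matrix `u_k` has maximal rank `d_k − d_{k−1}`. -/
theorem uMat_rank
    (d m : ℕ) (hd : 0 < d) (hm : 0 < m)
    (A : Matrix (Fin d) (Fin d) ℝ) (B : Matrix (Fin d) (Fin m) ℝ)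
    (n : ℕ) (hK : kalmanSpan d m A B n = ⊤)
    (hmin : ∀ N : ℕ, kalmanSpan d m A B N = ⊤ → n ≤ N)
    (e : Fin d → Fin d → ℝ)
    (h_on : ∀ i j : Fin d, e i ⬝ᵥ e j = if i = j then (1:ℝ) else 0)
    (h_adapt : ∀ k : ℕ, 1 ≤ k → k ≤ n →
      kalmanSpan d m A B k =
        Submodule.span ℝ {x | ∃ j : Fin d, (j : ℕ) < dk A B k ∧ x = e j}) :
    ∀ k : ℕ, 1 ≤ k → k ≤ n → (uMat A B e k).rank = dk A B k - dk A B (k - 1) := by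
  intro k hk1 hkn
  -- basic facts about dimensions
  have hmono : dk A B (k - 1) ≤ dk A B k := by
    apply Submodule.finrank_mono
    apply Submodule.span_mono
    rintro x ⟨l, hl, v, rfl⟩
    exact ⟨l, lt_of_lt_of_le hl (Nat.sub_le k 1), v, rfl⟩
  have hqd : dk A B k ≤ d := by
    have := Submodule.finrank_le (kalmanSpan d m A B k)
    rwa [Module.finrank_fin_fun] at this
  -- the index embedding
  have hlt : ∀ j : Fin (dk A B k - dk A B (k - 1)), dk A B (k - 1) + (j : ℕ) < d := by
    intro j; have := j.2; omega
  set ι : Fin (dk A B k - dk A B (k - 1)) → Fin d :=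
    fun j => ⟨dk A B (k - 1) + (j : ℕ), hlt j⟩ with hι
  have hιinj : Function.Injective ι := by
    intro a b hab
    have : (ι a : ℕ) = (ι b : ℕ) := by rw [hab]
    simp only [hι] at this
    exact Fin.ext (by omega)
  set c : ℝ := (Nat.factorial (k - 1) : ℝ) with hc
  have hc0 : c ≠ 0 := Nat.cast_ne_zero.mpr (Nat.factorial_ne_zero _)
  -- entries of uMat
  have hentry : ∀ j i, uMat A B e k j i = (e (ι j) ⬝ᵥ fun a => (A ^ (k - 1) * B) a i) / c := by
    intro j i
    simp only [uMat, of_apply, dif_pos (hlt j)]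
    rfl
  -- orthogonality to E_{k-1}
  have horth : ∀ j : Fin (dk A B k - dk A B (k - 1)), ∀ y ∈ kalmanSpan d m A B (k - 1),
      e (ι j) ⬝ᵥ y = 0 := by
    intro j y hy
    rcases Nat.lt_or_ge k 2 with hk2 | hk2
    · -- k = 1, E_0 = ⊥
      have hk : k = 1 := by omega
      have hbot : kalmanSpan d m A B (k - 1) = ⊥ := by
        rw [hk]
        apply Submodule.span_eq_bot.mpr
        rintro x ⟨l, hl, -⟩
        exact absurd hl (Nat.not_lt_zero l)
      rw [hbot] at hy
      simp only [Submodule.mem_bot] at hy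
      simp [hy, dotProduct]
    · rw [h_adapt (k - 1) (by omega) (by omega)] at hy
      induction hy using Submodule.span_induction with
      | mem z hz =>
        obtain ⟨i, hi, rfl⟩ := hz
        rw [h_on]
        rw [if_neg]
        intro h
        have : (ι j : ℕ) = (i : ℕ) := by rw [h]
        simp only [hι] at this
        omega
      | zero => simp [dotProduct]
      | add a b _ _ ha hb => rw [dotProduct_add, ha, hb, add_zero]
      | smul r a _ ha => rw [dotProduct_smul, ha, smul_zero]
  -- decomposition of E_k
  have hdecomp : kalmanSpan d m A B k ≤
      kalmanSpan d m A B (k - 1) ⊔ LinearMap.range (A ^ (k - 1) * B).mulVecLin := by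
    apply Submodule.span_le.mpr
    rintro x ⟨l, hl, v, rfl⟩
    rcases Nat.lt_or_ge l (k - 1) with hl' | hl'
    · exact Submodule.mem_sup_left (Submodule.subset_span ⟨l, hl', v, rfl⟩)
    · have : l = k - 1 := by omega
      subst this
      exact Submodule.mem_sup_right ⟨v, by simp [Matrix.mulVecLin_apply]⟩
  -- surjectivity of mulVecLin
  have hsurj : Function.Surjective (uMat A B e k).mulVecLin := by
    intro w
    set x : Fin d → ℝ := ∑ j, (w j * c) • e (ι j) with hx
    have hxmem : x ∈ kalmanSpan d m A B k := by
      rw [h_adapt k hk1 hkn]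
      apply Submodule.sum_mem
      intro j _
      apply Submodule.smul_mem
      apply Submodule.subset_span
      exact ⟨ι j, by simp only [hι]; have := j.2; omega, rfl⟩
    obtain ⟨y, hy, z, hz, hyz⟩ := Submodule.mem_sup.mp (hdecomp hxmem)
    obtain ⟨v, rfl⟩ := hz
    refine ⟨v, ?_⟩
    funext j
    have hdot : e (ι j) ⬝ᵥ (A ^ (k - 1) * B).mulVec v = w j * c := by
      have h1 : e (ι j) ⬝ᵥ x = w j * c := by
        have expand : e (ι j) ⬝ᵥ x = ∑ j', (w j' * c) * (e (ι j) ⬝ᵥ e (ι j')) := by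
          simp only [hx, dotProduct, Finset.sum_apply, Pi.smul_apply, smul_eq_mul,
            Finset.mul_sum]
          rw [Finset.sum_comm]
          exact Finset.sum_congr rfl fun j' _ => Finset.sum_congr rfl fun a _ => by ring
        rw [expand, Finset.sum_eq_single j]
        · rw [h_on, if_pos rfl, mul_one]
        · intro b _ hb
          rw [h_on, if_neg (fun h => hb ((hιinj h).symm)), mul_zero]
        · intro h; exact absurd (Finset.mem_univ j) h
      have h2 : e (ι j) ⬝ᵥ y = 0 := horth j y hy
      have h3 : (A ^ (k - 1) * B).mulVecLin v = x - y := by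
        rw [← hyz]; abel
      rw [Matrix.mulVecLin_apply] at h3
      rw [h3, dotProduct_sub, h1, h2, sub_zero]
    have : (uMat A B e k).mulVecLin v j = (e (ι j) ⬝ᵥ (A ^ (k - 1) * B).mulVec v) / c := by
      rw [Matrix.mulVecLin_apply, Matrix.dotProduct_mulVec]
      simp only [Matrix.mulVec, Matrix.vecMul, hentry, dotProduct]
      rw [Finset.sum_div]
      exact Finset.sum_congr rfl fun i _ => by ring
    rw [this, hdot]
    field_simp
  have hrange : LinearMap.range (uMat A B e k).mulVecLin = ⊤ :=
    LinearMap.range_eq_top.mpr hsurj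
  rw [Matrix.rank, hrange, finrank_top, Module.finrank_fin_fun]
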